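/- Let A be an n×n real symmetric matrix, x a standard Gaussian vector, Δ = xᵀAx - Tr(A). Then for every t > 0, P(Δ > t) ≤ (1 + t/(n‖A‖))^(n/2) · exp(-t/(2‖A‖)), and the right-hand side is strictly less than 1. -/

import Mathlib

open MeasureTheory ProbabilityTheory


-- L1 : (1-b) * exp (2b) ≤ 1 + b for 0 ≤ b
lemma L1 {b : ℝ} (hb : 0 ≤ b) : (1 - b) * Real.exp (2 * b) ≤ 1 + b := by
  have key : ∀ x : ℝ, 0 ≤ x → 0 ≤ (1 + x) - (1 - x) * Real.exp (2 * x) := by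
    intro x hx
    have hmono : Monotone (fun x : ℝ => (1 + x) - (1 - x) * Real.exp (2 * x)) := by
      apply monotone_of_deriv_nonneg
      · fun_prop
      · intro y
        have hd : HasDerivAt (fun x : ℝ => (1 + x) - (1 - x) * Real.exp (2 * x))
            (1 - ((-1) * Real.exp (2 * y) + (1 - y) * (Real.exp (2 * y) * 2))) y := by
          have h1 : HasDerivAt (fun x : ℝ => 1 + x) 1 y := by
            simpa using (hasDerivAt_id y).const_add 1
          have h2 : HasDerivAt (fun x : ℝ => 1 - x) (-1) y := by
            exact (hasDerivAt_id' y).const_sub 1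
          have h3 : HasDerivAt (fun x : ℝ => Real.exp (2 * x)) (Real.exp (2 * y) * 2) y := by
            simpa using (((hasDerivAt_id y).const_mul (2:ℝ)).exp)
          exact h1.sub (h2.mul h3)
        rw [hd.deriv]
        have : (1 - 2 * y) ≤ Real.exp (-(2 * y)) := by
          have := Real.add_one_le_exp (-(2*y)); linarith
        have h4 : (1 - 2 * y) * Real.exp (2 * y) ≤ Real.exp (-(2*y)) * Real.exp (2*y) :=
          mul_le_mul_of_nonneg_right this (Real.exp_nonneg _)
        rw [← Real.exp_add] at h4
        simp only [neg_add_cancel, Real.exp_zero] at h4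
        nlinarith [Real.exp_pos (2*y)]
    have := hmono hx
    simp only at this
    simpa using this
  have := key b hb
  linarith

-- key inequality : exp (b - a) * (1 - b) ≤ 1 - a  for |a| ≤ b < 1
lemma gauss_key {a b : ℝ} (hab : |a| ≤ b) (hb1 : b < 1) :
    Real.exp (b - a) * (1 - b) ≤ 1 - a := by
  have hb0 : 0 ≤ b := le_trans (abs_nonneg a) hab
  have ha1 : -b ≤ a := neg_le_of_abs_le hab
  have ha2 : a ≤ b := le_of_abs_le hab
  rcases le_or_gt 0 a with ha | ha
  · -- 0 ≤ a ≤ b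
    have h1 : (1 - (b - a)) * Real.exp (b - a) ≤ 1 := by
      have : (1 - (b - a)) ≤ Real.exp (-(b - a)) := by
        have := Real.add_one_le_exp (-(b-a)); linarith
      have h4 : (1 - (b - a)) * Real.exp (b - a) ≤ Real.exp (-(b-a)) * Real.exp (b-a) :=
        mul_le_mul_of_nonneg_right this (Real.exp_nonneg _)
      rw [← Real.exp_add] at h4
      simpa using h4
    have h2 : 1 ≤ Real.exp (b - a) := Real.one_le_exp (by linarith)
    nlinarith [Real.exp_pos (b - a)]
  · -- -b ≤ a < 0
    have hL1 := L1 hb0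
    have hE : 1 + (a + b) ≤ Real.exp (a + b) := by
      have := Real.add_one_le_exp (a + b); linarith
    have hsplit : Real.exp (b - a) * Real.exp (a + b) = Real.exp (2 * b) := by
      rw [← Real.exp_add]; ring_nf
    have hpos1 : (0:ℝ) < Real.exp (a + b) := Real.exp_pos _
    have hpos2 : (0:ℝ) < Real.exp (b - a) := Real.exp_pos _
    -- exp(b-a)(1-b) * exp(a+b) = exp(2b)(1-b) ≤ 1+b ≤ (1-a)(1+a+b) ≤ (1-a) exp(a+b)
    have step1 : Real.exp (b - a) * (1 - b) * Real.exp (a + b) ≤ 1 + b := by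
      calc Real.exp (b - a) * (1 - b) * Real.exp (a + b)
          = (1 - b) * (Real.exp (b - a) * Real.exp (a + b)) := by ring
        _ = (1 - b) * Real.exp (2 * b) := by rw [hsplit]
        _ ≤ 1 + b := hL1
    have step2 : 1 + b ≤ (1 - a) * (1 + (a + b)) := by nlinarith
    have step3 : (1 - a) * (1 + (a + b)) ≤ (1 - a) * Real.exp (a + b) :=
      mul_le_mul_of_nonneg_left hE (by linarith)
    have := le_trans (le_trans step1 step2) step3
    exact le_of_mul_le_mul_right (by linarith) hpos1

lemma sqrt_exp (x : ℝ) : Real.sqrt (Real.exp x) = Real.exp (x / 2) := by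
  rw [show Real.exp x = (Real.exp (x / 2)) ^ 2 by
    rw [sq, ← Real.exp_add]; ring_nf]
  exact Real.sqrt_sq (Real.exp_nonneg _)

lemma factor_mono {lam alpha s : ℝ} (h : |lam| ≤ alpha) (hs : 0 < s)
    (h1 : 2 * s * alpha < 1) :
    Real.exp (-(s * lam)) * (Real.sqrt (1 - 2 * s * lam))⁻¹ ≤
      Real.exp (-(s * alpha)) * (Real.sqrt (1 - 2 * s * alpha))⁻¹ := by
  set a := 2 * s * lam with ha_def
  set b := 2 * s * alpha with hb_def
  have hab : |a| ≤ b := by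
    rw [ha_def, hb_def]
    calc |2 * s * lam| = 2 * s * |lam| := by
          rw [abs_mul, abs_of_nonneg (by linarith : (0:ℝ) ≤ 2 * s)]
      _ ≤ 2 * s * alpha := by nlinarith
  have hkey := gauss_key hab h1
  have hb0 : 1 - b > 0 := by linarith
  have ha0 : 1 - a > 0 := lt_of_lt_of_le (by positivity) hkey
  have hsqrt : Real.exp ((b - a) / 2) * Real.sqrt (1 - b) ≤ Real.sqrt (1 - a) := by
    have := Real.sqrt_le_sqrt hkey
    rwa [Real.sqrt_mul (Real.exp_nonneg _), sqrt_exp] at this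
  have hsa : 0 < Real.sqrt (1 - a) := Real.sqrt_pos.2 ha0
  have hsb : 0 < Real.sqrt (1 - b) := Real.sqrt_pos.2 hb0
  have key2 : Real.exp (-(a/2)) * Real.sqrt (1 - b) ≤ Real.exp (-(b/2)) * Real.sqrt (1 - a) := by
    have := mul_le_mul_of_nonneg_left hsqrt (Real.exp_nonneg (-(b/2)))
    calc Real.exp (-(a/2)) * Real.sqrt (1 - b)
        = Real.exp (-(b/2)) * (Real.exp ((b - a)/2) * Real.sqrt (1 - b)) := by
          rw [← mul_assoc, ← Real.exp_add]; ring_nf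
      _ ≤ Real.exp (-(b/2)) * Real.sqrt (1 - a) := this
  have goal' : Real.exp (-(a/2)) * (Real.sqrt (1 - a))⁻¹ ≤
      Real.exp (-(b/2)) * (Real.sqrt (1 - b))⁻¹ := by
    rw [← div_eq_mul_inv, ← div_eq_mul_inv, div_le_div_iff₀ hsa hsb]
    exact key2
  have e1 : -(s * lam) = -(a/2) := by rw [ha_def]; ring
  have e2 : -(s * alpha) = -(b/2) := by rw [hb_def]; ring
  rw [e1, e2]
  exact goal'

lemma lintegral_pi_prod {n : ℕ} (μ : Fin n → Measure ℝ) [∀ i, SigmaFinite (μ i)]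
    (f : Fin n → ℝ → ENNReal) (hf : ∀ i, Measurable (f i)) :
    ∫⁻ x, ∏ i, f i (x i) ∂(Measure.pi μ) = ∏ i, ∫⁻ u, f i u ∂(μ i) := by
  induction n with
  | zero => simp
  | succ m ih =>
    have hmp := (measurePreserving_piFinSuccAbove μ 0).symm
    rw [← hmp.lintegral_comp (by
      apply Finset.measurable_prod
      intro i _
      exact (hf i).comp (measurable_pi_apply i))]
    simp_rw [MeasurableEquiv.piFinSuccAbove_symm_apply, Fin.insertNthEquiv,
      Fin.prod_univ_succ, Fin.insertNth_zero, Equiv.coe_fn_mk, Fin.cons_succ,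
      Fin.zero_succAbove, Fin.cons_zero, cast_eq]
    rw [lintegral_prod_mul (f := f 0) (g := fun y : Fin m → ℝ => ∏ i, f i.succ (y i)) (hf 0).aemeasurable ?_]
    · rw [ih (fun i => μ i.succ) (fun i => f i.succ) (fun i => hf i.succ)]
    · exact (Finset.measurable_prod _ fun i _ =>
          (hf i.succ).comp (measurable_pi_apply i)).aemeasurable

lemma pi_gauss (n : ℕ) :
    (Measure.pi fun _ : Fin n => gaussianReal 0 1) =
      (Measure.pi fun _ : Fin n => (volume : Measure ℝ)).withDensity
        (fun x => ∏ i, gaussianPDF 0 1 (x i)) := by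
  refine Measure.pi_eq fun s hs => ?_
  rw [withDensity_apply _ (MeasurableSet.univ_pi hs), ← lintegral_indicator
    (MeasurableSet.univ_pi hs)]
  have hind : ∀ x : Fin n → ℝ, (Set.pi Set.univ s).indicator
      (fun x => ∏ i, gaussianPDF 0 1 (x i)) x = ∏ i, (s i).indicator (gaussianPDF 0 1) (x i) := by
    intro x
    by_cases hx : x ∈ Set.pi Set.univ s
    · rw [Set.indicator_of_mem hx]
      exact Finset.prod_congr rfl fun i _ =>
        (Set.indicator_of_mem (hx i (Set.mem_univ i)) _).symm
    · rw [Set.indicator_of_notMem hx]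
      have : ∃ i, x i ∉ s i := by
        by_contra h
        push_neg at h
        exact hx (Set.mem_univ_pi.mpr h)
      obtain ⟨i, hi⟩ := this
      exact (Finset.prod_eq_zero (Finset.mem_univ i) (Set.indicator_of_notMem hi _)).symm
  simp_rw [hind]
  rw [lintegral_pi_prod _ _ (fun i => (measurable_gaussianPDF 0 1).indicator (hs i))]
  exact Finset.prod_congr rfl fun i _ => by
    rw [lintegral_indicator (hs i), ← gaussianReal_apply 0 one_ne_zero (s i)]

lemma map_withDensity_mequiv {α : Type*} [MeasurableSpace α] (e : α ≃ᵐ α) (μ : Measure α)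
    (g : α → ENNReal) (hg : Measurable g) :
    Measure.map e (μ.withDensity g) = (Measure.map e μ).withDensity (g ∘ ⇑e.symm) := by
  ext s hs
  rw [MeasurableEquiv.map_apply, withDensity_apply _ (hs.preimage e.measurable),
    withDensity_apply _ hs,
    setLIntegral_map hs (hg.comp e.symm.measurable) e.measurable]
  refine lintegral_congr fun x => ?_
  simp

open Real in
lemma prod_pdf_eq {n : ℕ} (u : Fin n → ℝ) :
    ∏ i, gaussianPDF 0 1 (u i) =
      ENNReal.ofReal ((Real.sqrt (2 * π))⁻¹ ^ n * Real.exp (-(∑ i, (u i) ^ 2) / 2)) := by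
  simp only [gaussianPDF]
  rw [← ENNReal.ofReal_prod_of_nonneg (fun i _ => gaussianPDFReal_nonneg 0 1 (u i))]
  congr 1
  simp only [gaussianPDFReal]
  rw [Finset.prod_mul_distrib, Finset.prod_const, ← Real.exp_sum]
  simp only [NNReal.coe_one, mul_one, sub_zero, Finset.card_univ, Fintype.card_fin]
  congr 1
  rw [← Finset.sum_div]
  congr 1
  rw [← Finset.sum_neg_distrib]

lemma map_gauss {n : ℕ} (M : Matrix (Fin n) (Fin n) ℝ) (hM : Invertible M)
    (hdet : |M.det| = 1)
    (hnorm : ∀ y : Fin n → ℝ, ∑ i, (M⁻¹.mulVec y i) ^ 2 = ∑ i, (y i) ^ 2) :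
    Measure.map (M.mulVec) (Measure.pi fun _ : Fin n => gaussianReal 0 1) =
      Measure.pi fun _ : Fin n => gaussianReal 0 1 := by
  classical
  let e : (Fin n → ℝ) ≃ᵐ (Fin n → ℝ) :=
    (M.toLinearEquiv' hM).toContinuousLinearEquiv.toHomeomorph.toMeasurableEquiv
  have hecoe : ⇑e = M.mulVec := by
    funext x
    simp only [e, Homeomorph.toMeasurableEquiv_coe, ContinuousLinearEquiv.coe_toHomeomorph]
    exact Matrix.toLin'_apply M x
  have hesymm : ⇑e.symm = (M⁻¹).mulVec := by
    funext y
    have h1 : e.symm y = Matrix.toLin' (⅟ M) y := rfl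
    rw [h1, Matrix.toLin'_apply, Matrix.invOf_eq_nonsing_inv]
  have hg : Measurable fun x : Fin n → ℝ => ∏ i, gaussianPDF 0 1 (x i) :=
    Finset.measurable_prod _ fun i _ =>
      (measurable_gaussianPDF 0 1).comp (measurable_pi_apply i)
  rw [pi_gauss, ← hecoe, map_withDensity_mequiv e _ _ hg]
  have hvol : Measure.map ⇑e (Measure.pi fun _ : Fin n => (volume : Measure ℝ)) =
      Measure.pi fun _ : Fin n => (volume : Measure ℝ) := by
    have hfun : ⇑e = ⇑(Matrix.toLin' M) := by
      rw [hecoe]; funext x; exact (Matrix.toLin'_apply M x).symm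
    rw [hfun, ← MeasureTheory.volume_pi,
      Real.map_matrix_volume_pi_eq_smul_volume_pi (by
        intro h; rw [h] at hdet; simp at hdet)]
    rw [abs_inv, hdet]
    simp
  rw [hvol]
  congr 1
  funext y
  simp only [Function.comp_apply, hesymm, prod_pdf_eq, hnorm]

open Real in
lemma gauss_sq_pdf_eq {c : ℝ} (x : ℝ) :
    Real.exp (c * x ^ 2) * gaussianPDFReal 0 1 x =
      (Real.sqrt (2 * π))⁻¹ * Real.exp (-(1/2 - c) * x ^ 2) := by
  simp only [gaussianPDFReal, NNReal.coe_one, mul_one, sub_zero]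
  rw [← mul_assoc, mul_comm (Real.exp _) _, mul_assoc, ← Real.exp_add]
  congr 2
  ring

open Real in
lemma gauss_sq_integrable {c : ℝ} (hc : c < 1/2) :
    Integrable (fun u => Real.exp (c * u ^ 2)) (gaussianReal 0 1) := by
  rw [gaussianReal_of_var_ne_zero 0 one_ne_zero]
  refine (integrable_withDensity_iff (measurable_gaussianPDF 0 1)
    (Filter.Eventually.of_forall fun x => ENNReal.ofReal_lt_top)).mpr ?_
  have : (fun x => Real.exp (c * x ^ 2) * (gaussianPDF 0 1 x).toReal) =
      fun x => (Real.sqrt (2 * π))⁻¹ * Real.exp (-(1/2 - c) * x ^ 2) := by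
    funext x
    rw [gaussianPDF, ENNReal.toReal_ofReal (gaussianPDFReal_nonneg 0 1 x), gauss_sq_pdf_eq]
  rw [this]
  exact (integrable_exp_neg_mul_sq (by linarith : (0:ℝ) < 1/2 - c)).const_mul _

open Real in
lemma gauss_sq_integral {c : ℝ} (hc : c < 1/2) :
    ∫ u, Real.exp (c * u ^ 2) ∂(gaussianReal 0 1) = (Real.sqrt (1 - 2 * c))⁻¹ := by
  rw [gaussianReal_of_var_ne_zero 0 one_ne_zero]
  have hrepr : (gaussianPDF 0 1) = fun x => ((gaussianPDFReal 0 1 x).toNNReal : ENNReal) := by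
    funext x; rfl
  rw [hrepr, integral_withDensity_eq_integral_smul
    ((measurable_gaussianPDFReal 0 1).real_toNNReal)]
  have : (fun x => (gaussianPDFReal 0 1 x).toNNReal • Real.exp (c * x ^ 2)) =
      fun x => (Real.sqrt (2 * π))⁻¹ * Real.exp (-(1/2 - c) * x ^ 2) := by
    funext x
    rw [NNReal.smul_def, smul_eq_mul, Real.coe_toNNReal _ (gaussianPDFReal_nonneg 0 1 x),
      mul_comm, gauss_sq_pdf_eq]
  rw [this, MeasureTheory.integral_const_mul, integral_gaussian]
  have hb : (0:ℝ) < 1/2 - c := by linarith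
  rw [← Real.sqrt_inv, ← Real.sqrt_mul (by positivity)]
  rw [show (2 * π)⁻¹ * (π / (1/2 - c)) = (1 - 2*c)⁻¹ by
    rw [div_eq_mul_inv, mul_inv]
    rw [show (2:ℝ)⁻¹ * π⁻¹ * (π * (1/2 - c)⁻¹) = (2⁻¹ * (1/2 - c)⁻¹) * (π⁻¹ * π) by ring]
    rw [inv_mul_cancel₀ Real.pi_ne_zero, mul_one, ← mul_inv]
    congr 1
    ring]
  rw [Real.sqrt_inv]

section LinAlg

open Matrix

variable {n : ℕ} {A : Matrix (Fin n) (Fin n) ℝ} (hA : A.IsHermitian)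

lemma spectral_real :
    A = (hA.eigenvectorUnitary : Matrix (Fin n) (Fin n) ℝ) * diagonal hA.eigenvalues *
      star (hA.eigenvectorUnitary : Matrix (Fin n) (Fin n) ℝ) := by
  have := hA.spectral_theorem
  simpa using this

lemma star_mul_self_V :
    star (hA.eigenvectorUnitary : Matrix (Fin n) (Fin n) ℝ) *
      (hA.eigenvectorUnitary : Matrix (Fin n) (Fin n) ℝ) = 1 :=
  (Unitary.mem_iff.mp hA.eigenvectorUnitary.2).1

lemma self_mul_star_V :
    (hA.eigenvectorUnitary : Matrix (Fin n) (Fin n) ℝ) *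
      star (hA.eigenvectorUnitary : Matrix (Fin n) (Fin n) ℝ) = 1 :=
  (Unitary.mem_iff.mp hA.eigenvectorUnitary.2).2

lemma quad_repr (x : Fin n → ℝ) :
    ∑ i, ∑ j, x i * A i j * x j =
      ∑ i, hA.eigenvalues i *
        ((star (hA.eigenvectorUnitary : Matrix (Fin n) (Fin n) ℝ)) *ᵥ x) i ^ 2 := by
  set V := (hA.eigenvectorUnitary : Matrix (Fin n) (Fin n) ℝ) with hV
  have h1 : ∑ i, ∑ j, x i * A i j * x j = x ⬝ᵥ (A *ᵥ x) := by
    simp [dotProduct, Matrix.mulVec, Finset.mul_sum, mul_assoc]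
  rw [h1]
  conv_lhs => rw [spectral_real hA]
  rw [← hV, ← Matrix.mulVec_mulVec, ← Matrix.mulVec_mulVec, Matrix.dotProduct_mulVec]
  have h2 : x ᵥ* V = star V *ᵥ x := by
    rw [Matrix.star_eq_conjTranspose, Matrix.conjTranspose_eq_transpose_of_trivial,
      Matrix.mulVec_transpose]
  rw [h2]
  simp [dotProduct, Matrix.mulVec_diagonal]
  exact Finset.sum_congr rfl fun i _ => by ring

lemma trace_eq_sum_eig : A.trace = ∑ i, hA.eigenvalues i := by
  conv_lhs => rw [spectral_real hA]
  rw [Matrix.trace_mul_cycle, star_mul_self_V hA, one_mul, Matrix.trace_diagonal]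

lemma norm_mulVec_V (y : Fin n → ℝ) :
    ∑ i, ((hA.eigenvectorUnitary : Matrix (Fin n) (Fin n) ℝ) *ᵥ y) i ^ 2 = ∑ i, y i ^ 2 := by
  set V := (hA.eigenvectorUnitary : Matrix (Fin n) (Fin n) ℝ) with hV
  have h1 : ∑ i, (V *ᵥ y) i ^ 2 = (V *ᵥ y) ⬝ᵥ (V *ᵥ y) := by
    simp [dotProduct, sq]
  have h2 : ∑ i, y i ^ 2 = y ⬝ᵥ y := by simp [dotProduct, sq]
  rw [h1, h2, Matrix.dotProduct_mulVec]
  have h3 : (V *ᵥ y) ᵥ* V = star V *ᵥ (V *ᵥ y) := by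
    rw [Matrix.star_eq_conjTranspose, Matrix.conjTranspose_eq_transpose_of_trivial,
      Matrix.mulVec_transpose]
  rw [h3, Matrix.mulVec_mulVec, star_mul_self_V hA, Matrix.one_mulVec]

end LinAlg

open Real in
lemma gauss_vol_integrable {c : ℝ} (hc : c < 1/2) :
    Integrable (fun u => Real.exp (c * u ^ 2) * gaussianPDFReal 0 1 u) (volume : Measure ℝ) := by
  have : (fun u => Real.exp (c * u ^ 2) * gaussianPDFReal 0 1 u) =
      fun x => (Real.sqrt (2 * π))⁻¹ * Real.exp (-(1/2 - c) * x ^ 2) := by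
    funext x; rw [gauss_sq_pdf_eq]
  rw [this]
  exact (integrable_exp_neg_mul_sq (by linarith : (0:ℝ) < 1/2 - c)).const_mul _

open Real in
lemma gauss_vol_integral {c : ℝ} (hc : c < 1/2) :
    ∫ u, Real.exp (c * u ^ 2) * gaussianPDFReal 0 1 u = (Real.sqrt (1 - 2 * c))⁻¹ := by
  have : (fun u => Real.exp (c * u ^ 2) * gaussianPDFReal 0 1 u) =
      fun x => (Real.sqrt (2 * π))⁻¹ * Real.exp (-(1/2 - c) * x ^ 2) := by
    funext x; rw [gauss_sq_pdf_eq]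
  rw [this, MeasureTheory.integral_const_mul, integral_gaussian]
  rw [← Real.sqrt_inv, ← Real.sqrt_mul (by positivity)]
  rw [show (2 * π)⁻¹ * (π / (1/2 - c)) = (1 - 2*c)⁻¹ by
    rw [div_eq_mul_inv, mul_inv]
    rw [show (2:ℝ)⁻¹ * π⁻¹ * (π * (1/2 - c)⁻¹) = (2⁻¹ * (1/2 - c)⁻¹) * (π⁻¹ * π) by ring]
    rw [inv_mul_cancel₀ Real.pi_ne_zero, mul_one, ← mul_inv]
    congr 1
    ring]
  rw [Real.sqrt_inv]

section Core

open Matrix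

lemma mgf_core {n : ℕ} {A : Matrix (Fin n) (Fin n) ℝ} (hA : A.IsHermitian) {s alpha : ℝ}
    (hs : 0 < s) (halpha : ∀ i, |hA.eigenvalues i| ≤ alpha)
    (h2s : 2 * s * alpha < 1) :
    Integrable (fun x => Real.exp (s * ((∑ i, ∑ j, x i * A i j * x j) - A.trace)))
      (Measure.pi fun _ : Fin n => gaussianReal 0 1) ∧
    ∫ x, Real.exp (s * ((∑ i, ∑ j, x i * A i j * x j) - A.trace))
        ∂(Measure.pi fun _ : Fin n => gaussianReal 0 1) ≤
      (Real.exp (-(s * alpha)) * (Real.sqrt (1 - 2 * s * alpha))⁻¹) ^ n := by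
  classical
  set lam := hA.eigenvalues with hlam
  set V := (hA.eigenvectorUnitary : Matrix (Fin n) (Fin n) ℝ) with hVdef
  set M := star V with hMdef
  -- basic facts
  have hMV : M * V = 1 := star_mul_self_V hA
  have hVM : V * M = 1 := self_mul_star_V hA
  have hMinv : Invertible M := invertibleOfRightInverse (a := M) (b := V) hMV
  have hMinveq : M⁻¹ = V := Matrix.inv_eq_right_inv hMV
  have hdet : |M.det| = 1 := by
    have h1 : M.det * V.det = 1 := by rw [← Matrix.det_mul, hMV, Matrix.det_one]
    have h2 : M.det = V.det := by
      rw [hMdef, Matrix.star_eq_conjTranspose, Matrix.conjTranspose_eq_transpose_of_trivial,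
        Matrix.det_transpose]
    have h3 : M.det ^ 2 = 1 := by rw [sq, h2]; rw [h2] at h1; exact h1
    have h4 : (|M.det| - 1) * (|M.det| + 1) = 0 := by
      have := sq_abs M.det
      nlinarith
    rcases mul_eq_zero.mp h4 with h | h
    · linarith
    · nlinarith [abs_nonneg M.det]
  have hnorm : ∀ y : Fin n → ℝ, ∑ i, (M⁻¹.mulVec y) i ^ 2 = ∑ i, (y i) ^ 2 := by
    intro y; rw [hMinveq]; exact norm_mulVec_V hA y
  set μ := (Measure.pi fun _ : Fin n => gaussianReal 0 1) with hμdef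
  let e : (Fin n → ℝ) ≃ᵐ (Fin n → ℝ) :=
    (M.toLinearEquiv' hMinv).toContinuousLinearEquiv.toHomeomorph.toMeasurableEquiv
  have hecoe : ⇑e = M.mulVec := by
    funext x
    exact Matrix.toLin'_apply M x
  have hMP : MeasurePreserving ⇑e μ μ := ⟨e.measurable, by
    rw [hecoe, hμdef]; exact map_gauss M hMinv hdet hnorm⟩
  -- factor functions
  set g : Fin n → ℝ → ℝ := fun i u => Real.exp (-(s * lam i)) * Real.exp (s * lam i * u ^ 2)
    with hgdef
  have hci : ∀ i : Fin n, s * lam i < 1 / 2 := by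
    intro i
    have h1 : lam i ≤ |lam i| := le_abs_self _
    have h2 := halpha i
    nlinarith
  have h2si : ∀ i : Fin n, 2 * (s * lam i) < 1 := fun i => by linarith [hci i]
  have hgmeas : ∀ i, Measurable (g i) := by
    intro i
    fun_prop
  have hgfact : ∀ x, Real.exp (s * ((∑ i, ∑ j, x i * A i j * x j) - A.trace)) =
      ∏ i, g i (e x i) := by
    intro x
    rw [quad_repr hA x, trace_eq_sum_eig hA, ← hlam, ← hVdef, ← hMdef,
      ← Finset.sum_sub_distrib, Finset.mul_sum, Real.exp_sum]
    refine Finset.prod_congr rfl fun i _ => ?_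
    have : e x i = (M *ᵥ x) i := by rw [hecoe]
    rw [this]
    show Real.exp (s * (lam i * (M *ᵥ x) i ^ 2 - lam i)) =
      Real.exp (-(s * lam i)) * Real.exp (s * lam i * (M *ᵥ x) i ^ 2)
    rw [← Real.exp_add]
    congr 1
    ring
  have hfac_int : ∀ i : Fin n, Integrable (fun u => g i u * gaussianPDFReal 0 1 u)
      (volume : Measure ℝ) := by
    intro i
    have h := (gauss_vol_integrable (c := s * lam i) (hci i)).const_mul
      (Real.exp (-(s * lam i)))
    exact h.congr (Filter.Eventually.of_forall fun u => by rw [hgdef]; ring)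
  have hfac_val : ∀ i : Fin n, ∫ u, g i u * gaussianPDFReal 0 1 u =
      Real.exp (-(s * lam i)) * (Real.sqrt (1 - 2 * s * lam i))⁻¹ := by
    intro i
    have h1 : (fun u => g i u * gaussianPDFReal 0 1 u) =
        fun u => Real.exp (-(s * lam i)) *
          (Real.exp ((s * lam i) * u ^ 2) * gaussianPDFReal 0 1 u) := by
      funext u; rw [hgdef]; ring
    rw [h1, MeasureTheory.integral_const_mul, gauss_vol_integral (hci i),
      show 1 - 2 * (s * lam i) = 1 - 2 * s * lam i by ring]
  set P : (Fin n → ℝ) → ℝ := fun y => ∏ i, g i (y i) with hPdef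
  have hPmeas : Measurable P :=
    Finset.measurable_prod _ fun i _ => (hgmeas i).comp (measurable_pi_apply i)
  have hdensmeas : Measurable fun x : Fin n → ℝ => ∏ i, gaussianPDF 0 1 (x i) :=
    Finset.measurable_prod _ fun i _ =>
      (measurable_gaussianPDF 0 1).comp (measurable_pi_apply i)
  have hdens_toReal : ∀ x : Fin n → ℝ,
      (∏ i, gaussianPDF 0 1 (x i)).toReal = ∏ i, gaussianPDFReal 0 1 (x i) := by
    intro x
    simp only [gaussianPDF]
    rw [← ENNReal.ofReal_prod_of_nonneg (fun i _ => gaussianPDFReal_nonneg 0 1 (x i)),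
      ENNReal.toReal_ofReal (Finset.prod_nonneg fun i _ => gaussianPDFReal_nonneg 0 1 (x i))]
  have hPint : Integrable P μ := by
    rw [hμdef, pi_gauss]
    refine (integrable_withDensity_iff hdensmeas
      (Filter.Eventually.of_forall fun x => ?_)).mpr ?_
    · exact ENNReal.prod_lt_top fun i _ => ENNReal.ofReal_lt_top
    · have heq : (fun x : Fin n → ℝ => P x * (∏ i, gaussianPDF 0 1 (x i)).toReal) =
          fun x => ∏ i, (g i (x i) * gaussianPDFReal 0 1 (x i)) := by
        funext x
        rw [hdens_toReal]
        show (∏ i, g i (x i)) * ∏ i, gaussianPDFReal 0 1 (x i) = _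
        rw [← Finset.prod_mul_distrib]
      rw [heq, ← MeasureTheory.volume_pi]
      exact MeasureTheory.Integrable.fintype_prod
        (f := fun i u => g i u * gaussianPDFReal 0 1 u) hfac_int
  have hPval : ∫ y, P y ∂μ = ∏ i, (Real.exp (-(s * lam i)) *
      (Real.sqrt (1 - 2 * s * lam i))⁻¹) := by
    rw [hμdef, pi_gauss]
    have hrepr : (fun x : Fin n → ℝ => ∏ i, gaussianPDF 0 1 (x i)) =
        fun x => ((∏ i, gaussianPDFReal 0 1 (x i)).toNNReal : ENNReal) := by
      funext x
      simp only [gaussianPDF]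
      rw [← ENNReal.ofReal_prod_of_nonneg (fun i _ => gaussianPDFReal_nonneg 0 1 (x i))]
      rfl
    rw [hrepr, integral_withDensity_eq_integral_smul (by
      exact (Finset.measurable_prod _ fun i _ =>
        (measurable_gaussianPDFReal 0 1).comp (measurable_pi_apply i)).real_toNNReal)]
    have heq2 : (fun x : Fin n → ℝ =>
        (∏ i, gaussianPDFReal 0 1 (x i)).toNNReal • P x) =
        fun x => ∏ i, (g i (x i) * gaussianPDFReal 0 1 (x i)) := by
      funext x
      rw [NNReal.smul_def, smul_eq_mul,
        Real.coe_toNNReal _ (Finset.prod_nonneg fun i _ => gaussianPDFReal_nonneg 0 1 (x i))]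
      show (∏ i, gaussianPDFReal 0 1 (x i)) * ∏ i, g i (x i) =
        ∏ i, (g i (x i) * gaussianPDFReal 0 1 (x i))
      rw [mul_comm, ← Finset.prod_mul_distrib]
    rw [heq2,
      MeasureTheory.integral_fintype_prod_eq_prod (ι := Fin n)
        (f := fun i u => g i u * gaussianPDFReal 0 1 u)]
    exact Finset.prod_congr rfl fun i _ => hfac_val i
  -- assemble
  have hFeq : (fun x => Real.exp (s * ((∑ i, ∑ j, x i * A i j * x j) - A.trace))) =
      P ∘ ⇑e := by
    funext x
    exact hgfact x
  have hFint : Integrable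
      (fun x => Real.exp (s * ((∑ i, ∑ j, x i * A i j * x j) - A.trace))) μ := by
    rw [hFeq]
    exact (hMP.integrable_comp hPint.aestronglyMeasurable).mpr hPint
  refine ⟨hFint, ?_⟩
  have hFval : ∫ x, Real.exp (s * ((∑ i, ∑ j, x i * A i j * x j) - A.trace)) ∂μ =
      ∫ y, P y ∂μ := by
    rw [hFeq]
    exact hMP.integral_comp e.measurableEmbedding P
  rw [hFval, hPval]
  have hbound : ∀ i : Fin n, Real.exp (-(s * lam i)) * (Real.sqrt (1 - 2 * s * lam i))⁻¹ ≤
      Real.exp (-(s * alpha)) * (Real.sqrt (1 - 2 * s * alpha))⁻¹ :=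
    fun i => factor_mono (halpha i) hs h2s
  calc ∏ i, (Real.exp (-(s * lam i)) * (Real.sqrt (1 - 2 * s * lam i))⁻¹)
      ≤ ∏ _i : Fin n, (Real.exp (-(s * alpha)) * (Real.sqrt (1 - 2 * s * alpha))⁻¹) :=
        Finset.prod_le_prod (fun i _ => by positivity) (fun i _ => hbound i)
    _ = (Real.exp (-(s * alpha)) * (Real.sqrt (1 - 2 * s * alpha))⁻¹) ^ n := by
        rw [Finset.prod_const, Finset.card_univ, Fintype.card_fin]

end Core
theorem stmt_9 (n : ℕ) (hn : 0 < n) (A : Matrix (Fin n) (Fin n) ℝ)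
    (hA : A.IsHermitian) (hα : 0 < ⨆ i, |hA.eigenvalues i|) (t : ℝ) (ht : 0 < t) :
    (Measure.pi fun _ : Fin n => gaussianReal 0 1)
        {x | t < (∑ i, ∑ j, x i * A i j * x j) - A.trace} ≤
      ENNReal.ofReal ((1 + t / (n * ⨆ i, |hA.eigenvalues i|)) ^ ((n : ℝ) / 2) *
        Real.exp (-t / (2 * ⨆ i, |hA.eigenvalues i|))) ∧
    (1 + t / (n * ⨆ i, |hA.eigenvalues i|)) ^ ((n : ℝ) / 2) *
        Real.exp (-t / (2 * ⨆ i, |hA.eigenvalues i|)) < 1 := by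
  have hn' : (0:ℝ) < n := Nat.cast_pos.mpr hn
  set α := ⨆ i, |hA.eigenvalues i| with hαdef
  have halpha : ∀ i, |hA.eigenvalues i| ≤ α :=
    fun i => le_ciSup (f := fun i => |hA.eigenvalues i|) (Set.Finite.bddAbove (Set.finite_range _)) i
  have hu : 0 < t / (n * α) := by positivity
  set u := t / (n * α) with hudef
  have hT : 0 < n * α + t := by positivity
  set s := t / (2 * α * (n * α + t)) with hsdef
  have hs : 0 < s := by positivity
  have h2sα : 2 * s * α = t / (n * α + t) := by
    rw [hsdef]
    field_simp
  have h2s1 : 2 * s * α < 1 := by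
    rw [h2sα, div_lt_one hT]
    nlinarith
  -- the key exponent computation
  have h1ab : 1 - 2 * s * α = n * α / (n * α + t) := by
    rw [h2sα]
    field_simp
    ring
  have hsqrt : (Real.sqrt (1 - 2 * s * α))⁻¹ = (1 + u) ^ ((1:ℝ)/2) := by
    rw [h1ab, ← Real.sqrt_inv, inv_div, hudef,
      show (n * α + t) / (n * α) = 1 + t / (n * α) by field_simp,
      Real.sqrt_eq_rpow]
  -- part 2 : RHS < 1
  have hexp_u : 1 + u < Real.exp u := by
    have := Real.add_one_lt_exp (ne_of_gt hu)
    linarith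
  have hne2 : (n:ℝ)/2 ≠ 0 := by positivity
  have hrpow_lt : (1 + u) ^ ((n:ℝ)/2) < Real.exp (t / (2 * α)) := by
    have h1 : (1 + u) ^ ((n:ℝ)/2) < (Real.exp u) ^ ((n:ℝ)/2) :=
      Real.rpow_lt_rpow (by positivity) hexp_u (by positivity)
    have h2 : (Real.exp u) ^ ((n:ℝ)/2) = Real.exp (u * ((n:ℝ)/2)) := by
      rw [Real.rpow_def_of_pos (Real.exp_pos u), Real.log_exp]
    have h3 : u * ((n:ℝ)/2) = t / (2 * α) := by
      rw [hudef]
      field_simp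
    rw [h2, h3] at h1
    exact h1
  have hpart2 : (1 + u) ^ ((n:ℝ)/2) * Real.exp (-t / (2 * α)) < 1 := by
    have := mul_lt_mul_of_pos_right hrpow_lt (Real.exp_pos (-t / (2 * α)))
    rwa [← Real.exp_add, show t / (2 * α) + -t / (2 * α) = 0 by ring, Real.exp_zero] at this
  refine ⟨?_, hpart2⟩
  -- part 1 : Chernoff
  obtain ⟨hint, hbnd⟩ := mgf_core hA hs halpha h2s1
  set μ := (Measure.pi fun _ : Fin n => gaussianReal 0 1) with hμdef
  set X : (Fin n → ℝ) → ℝ := fun x => (∑ i, ∑ j, x i * A i j * x j) - A.trace with hXdef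
  have hchern := ProbabilityTheory.measure_ge_le_exp_mul_mgf (μ := μ) (X := X) t hs.le hint
  have hmono : μ {x | t < X x} ≤ μ {x | t ≤ X x} :=
    measure_mono fun x hx => le_of_lt (Set.mem_setOf_eq ▸ hx)
  have hmgf : ProbabilityTheory.mgf X μ s = ∫ x, Real.exp (s * X x) ∂μ := rfl
  have hα0 : α ≠ 0 := ne_of_gt hα
  have hT0 : (n * α + t) ≠ 0 := ne_of_gt hT
  have hval : Real.exp (-s * t) *
      ((Real.exp (-(s * α)) * (Real.sqrt (1 - 2 * s * α))⁻¹) ^ n) =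
      (1 + u) ^ ((n:ℝ)/2) * Real.exp (-t / (2 * α)) := by
    rw [mul_pow, hsqrt, ← Real.rpow_natCast ((1 + u) ^ ((1:ℝ)/2)) n,
      ← Real.rpow_mul (by positivity : (0:ℝ) ≤ 1 + u),
      show (1:ℝ)/2 * (n:ℝ) = (n:ℝ)/2 by ring,
      ← Real.exp_nat_mul, ← mul_assoc, ← Real.exp_add,
      show -s * t + n * -(s * α) = -t / (2 * α) by
        rw [hsdef]; field_simp; ring]
    ring
  have hR_nonneg : 0 ≤ (1 + u) ^ ((n:ℝ)/2) * Real.exp (-t / (2 * α)) := by positivity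
  rw [ENNReal.le_ofReal_iff_toReal_le (measure_ne_top μ _) hR_nonneg]
  calc (μ {x | t < X x}).toReal
      ≤ (μ {x | t ≤ X x}).toReal := ENNReal.toReal_mono (measure_ne_top _ _) hmono
    _ ≤ Real.exp (-s * t) * ProbabilityTheory.mgf X μ s := hchern
    _ ≤ Real.exp (-s * t) *
        ((Real.exp (-(s * α)) * (Real.sqrt (1 - 2 * s * α))⁻¹) ^ n) := by
          refine mul_le_mul_of_nonneg_left ?_ (Real.exp_nonneg _)
          rw [hmgf]
          exact hbnd
    _ = (1 + u) ^ ((n:ℝ)/2) * Real.exp (-t / (2 * α)) := hval
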